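/- arXiv:1706.01973 — 4 statements merged into one kernel-verified Lean document; each statement's English description precedes it below -/
import Mathlib

section
/- For j = 0 and all real x with -1 < x < 1, the principal value integral ∫_{-1}^{1} √(1-t²)/(t-x) dt equals -π x. -/
open Real Filter intervalIntegral

noncomputable def Fa (x t : ℝ) : ℝ :=
  Real.sqrt (1 - t ^ 2) - x * Real.arcsin t +
    Real.sqrt (1 - x ^ 2) *
      (Real.log (t - x) - Real.log (1 - x * t + Real.sqrt (1 - x ^ 2) * Real.sqrt (1 - t ^ 2)))

lemma one_sub_mul_pos {x t : ℝ} (hx1 : -1 < x) (hx2 : x < 1) (ht1 : -1 ≤ t) (ht2 : t ≤ 1) :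
    0 < 1 - x * t := by
  have h1 : (0:ℝ) ≤ (1 - x) * (1 + t) := by nlinarith
  have h2 : (0:ℝ) ≤ (1 + x) * (1 - t) := by nlinarith
  nlinarith

lemma key_deriv (x : ℝ) (hx1 : -1 < x) (hx2 : x < 1) (t : ℝ) (ht1 : -1 < t) (ht2 : t < 1)
    (htx : t ≠ x) :
    HasDerivAt (Fa x) (Real.sqrt (1 - t ^ 2) / (t - x)) t := by
  have h1t : (0:ℝ) < 1 - t ^ 2 := by nlinarith
  have h1x : (0:ℝ) < 1 - x ^ 2 := by nlinarith
  set A := Real.sqrt (1 - t ^ 2) with hAdef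
  set B := Real.sqrt (1 - x ^ 2) with hBdef
  have hApos : 0 < A := Real.sqrt_pos.mpr h1t
  have hBpos : 0 < B := Real.sqrt_pos.mpr h1x
  have hA : A ^ 2 = 1 - t ^ 2 := Real.sq_sqrt h1t.le
  have hB : B ^ 2 = 1 - x ^ 2 := Real.sq_sqrt h1x.le
  have htx' : t - x ≠ 0 := sub_ne_zero.mpr htx
  have hDpos : 0 < 1 - x * t + B * A :=
    lt_of_lt_of_le (one_sub_mul_pos hx1 hx2 ht1.le ht2.le)
      (by nlinarith [mul_nonneg hBpos.le hApos.le])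
  -- derivative of sqrt (1 - t^2)
  have hpoly : HasDerivAt (fun t : ℝ => 1 - t ^ 2) (-(2 * t)) t := by
    simpa using ((hasDerivAt_pow 2 t).const_sub 1)
  have hsqrt : HasDerivAt (fun t : ℝ => Real.sqrt (1 - t ^ 2)) (-(2 * t) / (2 * A)) t :=
    hpoly.sqrt (by positivity)
  have harcsin : HasDerivAt (fun t : ℝ => x * Real.arcsin t) (x * (1 / A)) t :=
    (Real.hasDerivAt_arcsin (by linarith) (by linarith)).const_mul x
  have hlog1 : HasDerivAt (fun t : ℝ => Real.log (t - x)) (1 / (t - x)) t := by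
    simpa using ((hasDerivAt_id t).sub_const x).log htx'
  have hD : HasDerivAt (fun t : ℝ => 1 - x * t + B * Real.sqrt (1 - t ^ 2))
      (-x + B * (-(2 * t) / (2 * A))) t := by
    have h1 : HasDerivAt (fun t : ℝ => 1 - x * t) (-x) t := by
      simpa using ((hasDerivAt_id t).const_mul x).const_sub 1
    exact h1.add (hsqrt.const_mul B)
  have hlog2 : HasDerivAt (fun t : ℝ => Real.log (1 - x * t + B * Real.sqrt (1 - t ^ 2)))
      ((-x + B * (-(2 * t) / (2 * A))) / (1 - x * t + B * A)) t :=
    hD.log (by positivity)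
  have hsum : HasDerivAt (Fa x)
      (-(2 * t) / (2 * A) - x * (1 / A) +
        B * (1 / (t - x) - (-x + B * (-(2 * t) / (2 * A))) / (1 - x * t + B * A))) t := by
    exact (hsqrt.sub harcsin).add ((hlog1.sub hlog2).const_mul B)
  convert hsum using 1
  have hDne : (1 - x * t + B * A) ≠ 0 := hDpos.ne'
  have hDne' : (1 + A * B - x * t) ≠ 0 := by rw [mul_comm A B]; intro h; apply hDne; linarith
  have hAne : A ≠ 0 := hApos.ne'
  have hD3 : (1 - t * x + A * B) ≠ 0 := by intro h; apply hDne; linarith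
  field_simp
  linear_combination ((1 - t * x + A * B) - B ^ 2) * hA + (A * B - (1 - t * x + A * B)) * hB

lemma key_ftc (x a b : ℝ) (hx1 : -1 < x) (hx2 : x < 1) (hab : a ≤ b) (ha : -1 ≤ a)
    (hb : b ≤ 1) (hsep : ∀ t ∈ Set.Icc a b, t ≠ x) :
    ∫ t in a..b, Real.sqrt (1 - t ^ 2) / (t - x) = Fa x b - Fa x a := by
  have hIcc : Set.uIcc a b = Set.Icc a b := Set.uIcc_of_le hab
  have hne : ∀ t ∈ Set.Icc a b, t - x ≠ 0 := fun t ht => sub_ne_zero.mpr (hsep t ht)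
  have hDpos : ∀ t ∈ Set.Icc a b,
      0 < 1 - x * t + Real.sqrt (1 - x ^ 2) * Real.sqrt (1 - t ^ 2) := by
    intro t ht
    have h1 : 0 < 1 - x * t := one_sub_mul_pos hx1 hx2 (le_trans ha ht.1) (le_trans ht.2 hb)
    have h2 : 0 ≤ Real.sqrt (1 - x ^ 2) * Real.sqrt (1 - t ^ 2) :=
      mul_nonneg (Real.sqrt_nonneg _) (Real.sqrt_nonneg _)
    linarith
  have hc1 : Continuous fun t : ℝ => Real.sqrt (1 - t ^ 2) := by
    exact Real.continuous_sqrt.comp (by continuity)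
  have hcF : ContinuousOn (Fa x) (Set.uIcc a b) := by
    rw [hIcc]
    apply ContinuousOn.add
    · exact (hc1.continuousOn).sub
        ((continuous_const.mul Real.continuous_arcsin).continuousOn)
    · apply ContinuousOn.mul continuousOn_const
      apply ContinuousOn.sub
      · exact ContinuousOn.log ((continuous_id.sub continuous_const).continuousOn) hne
      · refine ContinuousOn.log ?_ (fun t ht => (hDpos t ht).ne')
        exact ((continuous_const.sub (continuous_const.mul continuous_id)).add
          (continuous_const.mul hc1)).continuousOn
  have hderiv : ∀ t ∈ Set.Ioo (min a b) (max a b),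
      HasDerivWithinAt (Fa x) (Real.sqrt (1 - t ^ 2) / (t - x)) (Set.Ioi t) t := by
    intro t ht
    rw [min_eq_left hab, max_eq_right hab] at ht
    exact (key_deriv x hx1 hx2 t (lt_of_le_of_lt ha ht.1) (lt_of_lt_of_le ht.2 hb)
      (hsep t ⟨ht.1.le, ht.2.le⟩)).hasDerivWithinAt
  have hint : IntervalIntegrable (fun t => Real.sqrt (1 - t ^ 2) / (t - x))
      MeasureTheory.volume a b := by
    apply ContinuousOn.intervalIntegrable
    rw [hIcc]
    exact (hc1.continuousOn).div ((continuous_id.sub continuous_const).continuousOn) hne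
  exact intervalIntegral.integral_eq_sub_of_hasDeriv_right hcF hderiv hint

lemma Fa_one (x : ℝ) : Fa x 1 = -x * (Real.pi / 2) := by
  have h : (1:ℝ) - 1 ^ 2 = 0 := by norm_num
  simp [Fa, h, Real.arcsin_one]

lemma Fa_neg_one (x : ℝ) : Fa x (-1) = x * (Real.pi / 2) := by
  have h : (1:ℝ) - (-1) ^ 2 = 0 := by norm_num
  have h2 : (-1 : ℝ) - x = -(1 - x * (-1)) := by ring
  simp [Fa, h, Real.arcsin_neg_one, h2, Real.log_neg_eq_log]
  refine Or.inr ?_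
  rw [show -x + (-1:ℝ) = -(1 + x) by ring, Real.log_neg_eq_log, sub_self]

theorem stmt_1 (x : ℝ) (hx : x ∈ Set.Ioo (-1 : ℝ) 1) :
    Tendsto (fun ε : ℝ =>
        (∫ t in (-1 : ℝ)..(x - ε), Real.sqrt (1 - t ^ 2) / (t - x)) +
        ∫ t in (x + ε)..(1 : ℝ), Real.sqrt (1 - t ^ 2) / (t - x))
      (nhdsWithin 0 (Set.Ioi 0)) (nhds (-Real.pi * x)) := by
  obtain ⟨hx1, hx2⟩ := hx
  set B := Real.sqrt (1 - x ^ 2) with hBdef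
  set h : ℝ → ℝ := fun ε =>
    (Real.sqrt (1 - (x - ε) ^ 2) - Real.sqrt (1 - (x + ε) ^ 2))
      - x * (Real.arcsin (x - ε) - Real.arcsin (x + ε))
      + B * (Real.log (1 - x * (x + ε) + B * Real.sqrt (1 - (x + ε) ^ 2))
          - Real.log (1 - x * (x - ε) + B * Real.sqrt (1 - (x - ε) ^ 2)))
      + (-x * (Real.pi / 2) - x * (Real.pi / 2)) with hhdef
  have hδ : (0:ℝ) < min (1 + x) (1 - x) := by
    apply lt_min <;> linarith
  have hc1 : Continuous fun ε : ℝ => Real.sqrt (1 - (x - ε) ^ 2) := by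
    exact Real.continuous_sqrt.comp (by continuity)
  have hc2 : Continuous fun ε : ℝ => Real.sqrt (1 - (x + ε) ^ 2) := by
    exact Real.continuous_sqrt.comp (by continuity)
  have hDne : (1:ℝ) - x * x + B * Real.sqrt (1 - x ^ 2) ≠ 0 := by
    have : B * Real.sqrt (1 - x ^ 2) = B ^ 2 := by rw [hBdef]; ring
    rw [this, Real.sq_sqrt (by nlinarith : (0:ℝ) ≤ 1 - x ^ 2)]
    nlinarith
  have hcont : ContinuousAt h 0 := by
    apply ContinuousAt.add
    apply ContinuousAt.add
    · exact ((hc1.sub hc2).continuousAt).sub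
        ((continuous_const.mul ((Real.continuous_arcsin.comp (by continuity : Continuous fun ε : ℝ => x - ε)).sub
          (Real.continuous_arcsin.comp (by continuity : Continuous fun ε : ℝ => x + ε)))).continuousAt)
    · apply ContinuousAt.mul continuousAt_const
      apply ContinuousAt.sub
      · apply ContinuousAt.log
        · exact ((continuous_const.sub (continuous_const.mul (by continuity))).add
            (continuous_const.mul hc2)).continuousAt
        · simpa using hDne
      · apply ContinuousAt.log
        · exact ((continuous_const.sub (continuous_const.mul (by continuity))).add
            (continuous_const.mul hc1)).continuousAt
        · simpa using hDne
    · exact continuousAt_const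
  have hh0 : h 0 = -Real.pi * x := by
    simp only [hhdef]
    norm_num
    ring
  have htend : Tendsto h (nhdsWithin 0 (Set.Ioi 0)) (nhds (-Real.pi * x)) := by
    rw [← hh0]
    exact hcont.continuousWithinAt.tendsto
  apply Tendsto.congr' _ htend
  have hmem : Set.Ioo (0:ℝ) (min (1 + x) (1 - x)) ∈ nhdsWithin (0:ℝ) (Set.Ioi 0) :=
    Ioo_mem_nhdsGT_of_mem ⟨le_refl 0, hδ⟩
  filter_upwards [hmem] with ε hε
  obtain ⟨hε0, hεδ⟩ := hε
  have hε1 : ε < 1 + x := lt_of_lt_of_le hεδ (min_le_left _ _)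
  have hε2 : ε < 1 - x := lt_of_lt_of_le hεδ (min_le_right _ _)
  have hI1 : ∫ t in (-1 : ℝ)..(x - ε), Real.sqrt (1 - t ^ 2) / (t - x)
      = Fa x (x - ε) - Fa x (-1) := by
    apply key_ftc x (-1) (x - ε) hx1 hx2 (by linarith) le_rfl (by linarith)
    intro t ht
    exact ne_of_lt (lt_of_le_of_lt ht.2 (by linarith))
  have hI2 : ∫ t in (x + ε)..(1 : ℝ), Real.sqrt (1 - t ^ 2) / (t - x)
      = Fa x 1 - Fa x (x + ε) := by
    apply key_ftc x (x + ε) 1 hx1 hx2 (by linarith) (by linarith) le_rfl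
    intro t ht
    exact ne_of_gt (lt_of_lt_of_le (by linarith) ht.1)
  rw [hI1, hI2, Fa_one, Fa_neg_one]
  have hlogc : Real.log (x - ε - x) = Real.log (x + ε - x) := by
    rw [show x - ε - x = -(x + ε - x) by ring, Real.log_neg_eq_log]
  simp only [hhdef, Fa, ← hBdef]
  rw [hlogc]
  ring
end

section
/- For j = 1 and all real x with -1 < x < 1, the principal value integral ∫_{-1}^{1} √(1-t²)·t/(t-x) dt equals -π x² + π/2. -/
open Real Filter intervalIntegral

noncomputable def pvHp (x t : ℝ) : ℝ :=
  x * t / (1 + Real.sqrt (1 - t ^ 2)) - 1 + Real.sqrt (1 - x ^ 2)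

noncomputable def pvHm (x t : ℝ) : ℝ :=
  x * t / (1 + Real.sqrt (1 - t ^ 2)) - 1 - Real.sqrt (1 - x ^ 2)

noncomputable def pvF (x t : ℝ) : ℝ :=
  t * Real.sqrt (1 - t ^ 2) / 2 + (1 / 2 - x ^ 2) * Real.arcsin t
    + x * Real.sqrt (1 - t ^ 2)
    + x * Real.sqrt (1 - x ^ 2) * (Real.log (pvHp x t) - Real.log (pvHm x t))

lemma pvHp_ne (x : ℝ) (hx1 : -1 < x) (hx2 : x < 1) (hx0 : x ≠ 0)
    {t : ℝ} (ht1 : -1 ≤ t) (ht2 : t ≤ 1) (htx : t ≠ x) : pvHp x t ≠ 0 := by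
  intro h
  have h1 : (0:ℝ) ≤ 1 - t ^ 2 := by nlinarith
  set c := Real.sqrt (1 - t ^ 2) with hcdef
  have hc0 : 0 ≤ c := Real.sqrt_nonneg _
  have hc2 : c ^ 2 = 1 - t ^ 2 := Real.sq_sqrt h1
  set w := Real.sqrt (1 - x ^ 2) with hwdef
  have hw0 : 0 ≤ w := Real.sqrt_nonneg _
  have hw2 : w ^ 2 = 1 - x ^ 2 := Real.sq_sqrt (by nlinarith)
  have hw1 : w < 1 := by nlinarith [sq_pos_of_ne_zero hx0]
  have hden : (0:ℝ) < 1 + c := by linarith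
  have key : x * t = (1 - w) * (1 + c) := by
    have h' : x * t / (1 + c) - 1 + w = 0 := h
    field_simp at h'
    linarith
  have h2 : t * (x ^ 2 * t - 2 * x * (1 - w) + t * (1 - w) ^ 2) = 0 := by
    linear_combination (x * t - (1 - w) + (1 - w) * c) * key + (1 - w) ^ 2 * hc2
  have ht0 : t ≠ 0 := by
    intro h0
    rw [h0, mul_zero] at key
    nlinarith
  have h3 : x ^ 2 * t - 2 * x * (1 - w) + t * (1 - w) ^ 2 = 0 := by
    rcases mul_eq_zero.1 h2 with h' | h'
    · exact absurd h' ht0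
    · exact h'
  have h4 : t * (2 * (1 - w)) = x * (2 * (1 - w)) := by
    linear_combination h3 - t * hw2
  exact htx (mul_right_cancel₀ (by nlinarith) h4)

lemma pvHm_neg (x : ℝ) (hx1 : -1 < x) (hx2 : x < 1)
    {t : ℝ} (ht1 : -1 ≤ t) (ht2 : t ≤ 1) : pvHm x t < 0 := by
  have h1 : (0:ℝ) ≤ 1 - t ^ 2 := by nlinarith
  have hc0 : 0 ≤ Real.sqrt (1 - t ^ 2) := Real.sqrt_nonneg _
  have hw0 : 0 ≤ Real.sqrt (1 - x ^ 2) := Real.sqrt_nonneg _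
  have hxt : x * t < 1 := by
    calc x * t ≤ |x * t| := le_abs_self _
    _ = |x| * |t| := abs_mul x t
    _ ≤ |x| * 1 := by
        have := abs_le.2 ⟨ht1, ht2⟩
        nlinarith [abs_nonneg x]
    _ < 1 := by rw [mul_one]; exact abs_lt.2 ⟨hx1, hx2⟩
  have h5 : x * t / (1 + Real.sqrt (1 - t ^ 2)) < 1 := by
    rw [div_lt_one (by linarith)]
    linarith
  have : pvHm x t = x * t / (1 + Real.sqrt (1 - t ^ 2)) - 1 - Real.sqrt (1 - x ^ 2) := rfl
  rw [this]
  linarith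

lemma pvF_hasDerivAt (x : ℝ) (hx1 : -1 < x) (hx2 : x < 1)
    {t : ℝ} (ht1 : -1 < t) (ht2 : t < 1) (htx : t ≠ x) :
    HasDerivAt (pvF x) (Real.sqrt (1 - t ^ 2) * t / (t - x)) t := by
  have h1 : (0:ℝ) < 1 - t ^ 2 := by nlinarith
  have hc : 0 < Real.sqrt (1 - t ^ 2) := Real.sqrt_pos.2 h1
  have hc2 : Real.sqrt (1 - t ^ 2) ^ 2 = 1 - t ^ 2 := Real.sq_sqrt h1.le
  have hw : 0 < Real.sqrt (1 - x ^ 2) := Real.sqrt_pos.2 (by nlinarith)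
  have hw2 : Real.sqrt (1 - x ^ 2) ^ 2 = 1 - x ^ 2 := Real.sq_sqrt (by nlinarith)
  set c := Real.sqrt (1 - t ^ 2) with hcdef
  set w := Real.sqrt (1 - x ^ 2) with hwdef
  have hden : (1:ℝ) + c ≠ 0 := by positivity
  have HD1 : HasDerivAt (fun s : ℝ => 1 - s ^ 2) (-(2 * t)) t := by
    simpa using (hasDerivAt_pow 2 t).const_sub 1
  have HDc : HasDerivAt (fun s : ℝ => Real.sqrt (1 - s ^ 2)) (-t / c) t := by
    have h := (Real.hasDerivAt_sqrt h1.ne').comp t HD1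
    refine h.congr_deriv ?_
    rw [← hcdef]
    field_simp
  have HA : HasDerivAt (fun s : ℝ => s * Real.sqrt (1 - s ^ 2) / 2)
      ((1 * c + t * (-t / c)) / 2) t := ((hasDerivAt_id t).mul HDc).div_const 2
  have HB : HasDerivAt (fun s : ℝ => (1 / 2 - x ^ 2) * Real.arcsin s)
      ((1 / 2 - x ^ 2) * (1 / c)) t :=
    (Real.hasDerivAt_arcsin (by linarith) (by linarith)).const_mul _
  have HC : HasDerivAt (fun s : ℝ => x * Real.sqrt (1 - s ^ 2)) (x * (-t / c)) t :=
    HDc.const_mul x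
  have HU : HasDerivAt (fun s : ℝ => x * s / (1 + Real.sqrt (1 - s ^ 2)))
      ((x * 1 * (1 + c) - x * t * (-t / c)) / (1 + c) ^ 2) t :=
    ((hasDerivAt_id t).const_mul x).div (HDc.const_add 1) hden
  have HP : HasDerivAt (fun s : ℝ => pvHp x s)
      ((x * 1 * (1 + c) - x * t * (-t / c)) / (1 + c) ^ 2) t := by
    unfold pvHp
    exact (HU.sub_const 1).add_const w
  have HM : HasDerivAt (fun s : ℝ => pvHm x s)
      ((x * 1 * (1 + c) - x * t * (-t / c)) / (1 + c) ^ 2) t := by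
    unfold pvHm
    exact (HU.sub_const 1).sub_const w
  rcases eq_or_ne x 0 with rfl | hx0
  · -- x = 0
    have hfun : pvF 0 = fun s : ℝ =>
        s * Real.sqrt (1 - s ^ 2) / 2 + (1 / 2 - (0:ℝ) ^ 2) * Real.arcsin s := by
      funext s
      simp only [pvF]
      ring
    rw [hfun]
    refine (HA.add HB).congr_deriv ?_
    have ht0 : t ≠ 0 := htx
    field_simp
    linear_combination -t * hc2
  · have hhp : pvHp x t ≠ 0 := pvHp_ne x hx1 hx2 hx0 ht1.le ht2.le htx
    have hhm : pvHm x t ≠ 0 := (pvHm_neg x hx1 hx2 ht1.le ht2.le).ne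
    have htx' : t - x ≠ 0 := sub_ne_zero.2 htx
    have HLp : HasDerivAt (fun s : ℝ => Real.log (pvHp x s))
        ((pvHp x t)⁻¹ * ((x * 1 * (1 + c) - x * t * (-t / c)) / (1 + c) ^ 2)) t :=
      (Real.hasDerivAt_log hhp).comp t HP
    have HLm : HasDerivAt (fun s : ℝ => Real.log (pvHm x s))
        ((pvHm x t)⁻¹ * ((x * 1 * (1 + c) - x * t * (-t / c)) / (1 + c) ^ 2)) t :=
      (Real.hasDerivAt_log hhm).comp t HM
    have hprod : pvHp x t * pvHm x t = 2 * x * (x - t) / (1 + c) := by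
      simp only [pvHp, pvHm, ← hcdef, ← hwdef]
      field_simp
      ring_nf
      linear_combination (3 - 2*x^2 - 3*w^2 + c - c*w^2 - x^2*c) * hc2 + (-4 + 3*t^2 - 4*c + c*t^2 + c + 2*c^2 + c^3) * hw2
    have hdiff : pvHm x t = pvHp x t - 2 * w := by
      simp only [pvHp, pvHm, ← hcdef, ← hwdef]; ring
    have Hlog2 : HasDerivAt
        (fun s : ℝ => Real.log (pvHp x s) - Real.log (pvHm x s)) (w / (c * (t - x))) t := by
      refine (HLp.sub HLm).congr_deriv ?_
      rw [← sub_mul]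
      have h9 : pvHp x t - 2 * w ≠ 0 := by rw [← hdiff]; exact hhm
      have hkey : (pvHp x t)⁻¹ - (pvHm x t)⁻¹ =
          (-2 * w) / (pvHp x t * pvHm x t) := by
        rw [hdiff]
        field_simp
        ring
      rw [hkey, hprod]
      have hxt' : x - t ≠ 0 := sub_ne_zero.2 (Ne.symm htx)
      field_simp
      ring_nf
      linear_combination (x - t) * hc2
    have Hlog := Hlog2.const_mul (x * w)
    have Htot := ((HA.add HB).add HC).add Hlog
    have hfun : pvF x = fun s : ℝ =>
        s * Real.sqrt (1 - s ^ 2) / 2 + (1 / 2 - x ^ 2) * Real.arcsin s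
          + x * Real.sqrt (1 - s ^ 2)
          + x * w * (Real.log (pvHp x s) - Real.log (pvHm x s)) := by
      funext s
      simp only [pvF, ← hwdef]
    rw [hfun]
    refine Htot.congr_deriv ?_
    field_simp
    ring_nf
    linear_combination (4*c*x*t - 4*c*x^2 - 4*c*x^3*t + 4*c*x^4 - 4*c*w^2*x*t + 4*c*w^2*x^2 - t - x) * hc2 + (-4*c*x*t + 4*c*x*t^3 + 4*c*x^2 - 4*c*x^2*t^2 + 4*c^3*t*x - 4*c^3*x^2 + 2*x) * hw2

lemma pvHp_continuous (x : ℝ) : Continuous fun s : ℝ => pvHp x s := by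
  unfold pvHp
  apply Continuous.add
  apply Continuous.sub
  · exact Continuous.div (by fun_prop) (by fun_prop) (fun s => by positivity)
  · exact continuous_const
  · exact continuous_const

lemma pvHm_continuous (x : ℝ) : Continuous fun s : ℝ => pvHm x s := by
  unfold pvHm
  apply Continuous.sub
  apply Continuous.sub
  · exact Continuous.div (by fun_prop) (by fun_prop) (fun s => by positivity)
  · exact continuous_const
  · exact continuous_const

lemma pvF_continuousOn (x : ℝ) (hx1 : -1 < x) (hx2 : x < 1) :
    ContinuousOn (pvF x) (Set.Icc (-1:ℝ) 1 \ {x}) := by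
  rcases eq_or_ne x 0 with rfl | hx0
  · have hfun : pvF 0 = fun s : ℝ =>
        s * Real.sqrt (1 - s ^ 2) / 2 + (1 / 2 - (0:ℝ) ^ 2) * Real.arcsin s := by
      funext s; simp only [pvF]; ring
    rw [hfun]
    apply Continuous.continuousOn
    have := Real.continuous_arcsin
    fun_prop
  · have hbase : Continuous fun s : ℝ =>
        s * Real.sqrt (1 - s ^ 2) / 2 + (1 / 2 - x ^ 2) * Real.arcsin s
          + x * Real.sqrt (1 - s ^ 2) := by
      have := Real.continuous_arcsin
      fun_prop
    have hlogp : ContinuousOn (fun s : ℝ => Real.log (pvHp x s))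
        (Set.Icc (-1:ℝ) 1 \ {x}) := by
      apply ContinuousOn.log (pvHp_continuous x).continuousOn
      intro y hy
      exact pvHp_ne x hx1 hx2 hx0 hy.1.1 hy.1.2 hy.2
    have hlogm : ContinuousOn (fun s : ℝ => Real.log (pvHm x s))
        (Set.Icc (-1:ℝ) 1 \ {x}) := by
      apply ContinuousOn.log (pvHm_continuous x).continuousOn
      intro y hy
      exact (pvHm_neg x hx1 hx2 hy.1.1 hy.1.2).ne
    have : ContinuousOn (fun s : ℝ =>
        (s * Real.sqrt (1 - s ^ 2) / 2 + (1 / 2 - x ^ 2) * Real.arcsin s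
          + x * Real.sqrt (1 - s ^ 2))
        + x * Real.sqrt (1 - x ^ 2) * (Real.log (pvHp x s) - Real.log (pvHm x s)))
        (Set.Icc (-1:ℝ) 1 \ {x}) :=
      hbase.continuousOn.add (continuousOn_const.mul (hlogp.sub hlogm))
    refine this.congr fun s _ => ?_
    simp only [pvF]

lemma pvF_boundary (x : ℝ) (hx1 : -1 < x) (hx2 : x < 1) :
    pvF x 1 - pvF x (-1) = -Real.pi * x ^ 2 + Real.pi / 2 := by
  have hs0 : Real.sqrt (1 - (1:ℝ) ^ 2) = 0 := by norm_num
  have hs0' : Real.sqrt (1 - (-1:ℝ) ^ 2) = 0 := by norm_num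
  rcases eq_or_ne x 0 with rfl | hx0
  · simp only [pvF, hs0, hs0', Real.arcsin_one, Real.arcsin_neg_one]
    ring
  · set w := Real.sqrt (1 - x ^ 2) with hwdef
    have hw : 0 < w := Real.sqrt_pos.2 (by nlinarith)
    have hw2 : w ^ 2 = 1 - x ^ 2 := Real.sq_sqrt (by nlinarith)
    have hp1 : pvHp x 1 = x - 1 + w := by simp [pvHp, hs0, ← hwdef]
    have hpm1 : pvHp x (-1) = -x - 1 + w := by simp [pvHp, hs0', ← hwdef]
    have hm1 : pvHm x 1 = x - 1 - w := by simp [pvHm, hs0, ← hwdef]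
    have hmm1 : pvHm x (-1) = -x - 1 - w := by simp [pvHm, hs0', ← hwdef]
    have ne1 : x - 1 + w ≠ 0 := by
      have := pvHp_ne x hx1 hx2 hx0 (t := 1) (by norm_num) le_rfl hx2.ne'
      rwa [hp1] at this
    have ne4' : -x - 1 + w ≠ 0 := by
      have := pvHp_ne x hx1 hx2 hx0 (t := -1) le_rfl (by norm_num) hx1.ne
      rwa [hpm1] at this
    have ne2 : x + 1 + w ≠ 0 := by nlinarith
    have ne3 : x - 1 - w ≠ 0 := by nlinarith
    have ne4 : x + 1 - w ≠ 0 := fun h => ne4' (by linarith)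
    have e1 : Real.log (x - 1 + w) + Real.log (x + 1 + w) = Real.log (2 * x * w) := by
      rw [← Real.log_mul ne1 ne2]
      congr 1
      linear_combination hw2
    have e2 : Real.log (x - 1 - w) + Real.log (x + 1 - w) = Real.log (2 * x * w) := by
      rw [← Real.log_mul ne3 ne4,
        show (x - 1 - w) * (x + 1 - w) = -(2 * x * w) by linear_combination hw2,
        Real.log_neg_eq_log]
    simp only [pvF, hp1, hpm1, hm1, hmm1, hs0, hs0', Real.arcsin_one, Real.arcsin_neg_one,
      ← hwdef]
    rw [show (-x - 1 + w : ℝ) = -(x + 1 - w) by ring,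
      show (-x - 1 - w : ℝ) = -(x + 1 + w) by ring,
      Real.log_neg_eq_log, Real.log_neg_eq_log]
    linear_combination x * w * e1 - x * w * e2

lemma pvF_limit (x : ℝ) (hx1 : -1 < x) (hx2 : x < 1) :
    Tendsto (fun ε : ℝ => pvF x (x - ε) - pvF x (x + ε))
      (nhdsWithin 0 (Set.Ioi 0)) (nhds 0) := by
  have Tm : Tendsto (fun ε : ℝ => x - ε) (nhdsWithin 0 (Set.Ioi 0)) (nhds x) :=
    ((continuous_const.sub continuous_id).tendsto' 0 x (by simp)).mono_left nhdsWithin_le_nhds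
  have Tp : Tendsto (fun ε : ℝ => x + ε) (nhdsWithin 0 (Set.Ioi 0)) (nhds x) :=
    ((continuous_const.add continuous_id).tendsto' 0 x (by simp)).mono_left nhdsWithin_le_nhds
  rcases eq_or_ne x 0 with rfl | hx0
  · have hfun : pvF 0 = fun s : ℝ =>
        s * Real.sqrt (1 - s ^ 2) / 2 + (1 / 2 - (0:ℝ) ^ 2) * Real.arcsin s := by
      funext s; simp only [pvF]; ring
    rw [hfun]
    have hg : Continuous fun s : ℝ =>
        s * Real.sqrt (1 - s ^ 2) / 2 + (1 / 2 - (0:ℝ) ^ 2) * Real.arcsin s := by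
      have := Real.continuous_arcsin
      fun_prop
    have h := ((hg.tendsto 0).comp Tm).sub ((hg.tendsto 0).comp Tp)
    simpa [Function.comp] using h
  · set w := Real.sqrt (1 - x ^ 2) with hwdef
    have hw : 0 < w := Real.sqrt_pos.2 (by nlinarith)
    have hw2 : w ^ 2 = 1 - x ^ 2 := Real.sq_sqrt (by nlinarith)
    have hdenw : (1:ℝ) + w ≠ 0 := by positivity
    -- continuous part
    have hCp : ContinuousAt (fun s : ℝ =>
        s * Real.sqrt (1 - s ^ 2) / 2 + (1 / 2 - x ^ 2) * Real.arcsin s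
          + x * Real.sqrt (1 - s ^ 2) - x * w * Real.log (pvHm x s)) x := by
      have h1 : Continuous fun s : ℝ =>
          s * Real.sqrt (1 - s ^ 2) / 2 + (1 / 2 - x ^ 2) * Real.arcsin s
            + x * Real.sqrt (1 - s ^ 2) := by
        have := Real.continuous_arcsin
        fun_prop
      have h2 : ContinuousAt (fun s : ℝ => Real.log (pvHm x s)) x :=
        ((pvHm_continuous x).continuousAt).log (pvHm_neg x hx1 hx2 hx1.le hx2.le).ne
      exact (h1.continuousAt).sub (continuousAt_const.mul h2)
    have T1 : Tendsto (fun ε : ℝ =>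
        ((x - ε) * Real.sqrt (1 - (x - ε) ^ 2) / 2 + (1 / 2 - x ^ 2) * Real.arcsin (x - ε)
          + x * Real.sqrt (1 - (x - ε) ^ 2) - x * w * Real.log (pvHm x (x - ε)))
        - ((x + ε) * Real.sqrt (1 - (x + ε) ^ 2) / 2 + (1 / 2 - x ^ 2) * Real.arcsin (x + ε)
          + x * Real.sqrt (1 - (x + ε) ^ 2) - x * w * Real.log (pvHm x (x + ε))))
        (nhdsWithin 0 (Set.Ioi 0)) (nhds 0) := by
      simpa using ((hCp.tendsto.comp Tm).sub (hCp.tendsto.comp Tp))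
    -- derivative of pvHp at x
    have h1x : (0:ℝ) < 1 - x ^ 2 := by nlinarith
    have HD1x : HasDerivAt (fun s : ℝ => 1 - s ^ 2) (-(2 * x)) x := by
      simpa using (hasDerivAt_pow 2 x).const_sub 1
    have HDcx : HasDerivAt (fun s : ℝ => Real.sqrt (1 - s ^ 2)) (-x / w) x := by
      have h := (Real.hasDerivAt_sqrt h1x.ne').comp x HD1x
      refine h.congr_deriv ?_
      rw [← hwdef]
      field_simp
    have HPx : HasDerivAt (fun s : ℝ => pvHp x s) (x / (w * (1 + w))) x := by
      have HU : HasDerivAt (fun s : ℝ => x * s / (1 + Real.sqrt (1 - s ^ 2)))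
          ((x * 1 * (1 + w) - x * x * (-x / w)) / (1 + w) ^ 2) x := by
        have := ((hasDerivAt_id x).const_mul x).div (HDcx.const_add 1) (by rw [← hwdef]; positivity)
        exact this
      have H2 : HasDerivAt (fun s : ℝ => pvHp x s)
          ((x * 1 * (1 + w) - x * x * (-x / w)) / (1 + w) ^ 2) x := by
        unfold pvHp
        exact (HU.sub_const 1).add_const w
      convert H2 using 1
      field_simp
      ring_nf
      linear_combination (-1 : ℝ) * hw2
    have hd0 : x / (w * (1 + w)) ≠ 0 := div_ne_zero hx0 (by positivity)
    have hpx0 : pvHp x x = 0 := by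
      simp only [pvHp, ← hwdef]
      field_simp
      linear_combination hw2
    have hs := hasDerivAt_iff_tendsto_slope.1 HPx
    have Tm' : Tendsto (fun ε : ℝ => x - ε) (nhdsWithin 0 (Set.Ioi 0))
        (nhdsWithin x {x}ᶜ) := by
      rw [tendsto_nhdsWithin_iff]
      refine ⟨Tm, eventually_mem_nhdsWithin.mono fun ε hε => ?_⟩
      have : (0:ℝ) < ε := hε
      simp only [Set.mem_compl_iff, Set.mem_singleton_iff]
      intro h
      nlinarith [h]
    have Tp' : Tendsto (fun ε : ℝ => x + ε) (nhdsWithin 0 (Set.Ioi 0))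
        (nhdsWithin x {x}ᶜ) := by
      rw [tendsto_nhdsWithin_iff]
      refine ⟨Tp, eventually_mem_nhdsWithin.mono fun ε hε => ?_⟩
      have : (0:ℝ) < ε := hε
      simp only [Set.mem_compl_iff, Set.mem_singleton_iff]
      intro h
      nlinarith [h]
    have s1 := hs.comp Tm'
    have s2 := hs.comp Tp'
    have ratio : Tendsto (fun ε : ℝ =>
        -(slope (fun s => pvHp x s) x (x - ε) / slope (fun s => pvHp x s) x (x + ε)))
        (nhdsWithin 0 (Set.Ioi 0)) (nhds (-1)) := by
      have h := (s1.div s2 hd0).neg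
      rw [div_self hd0] at h
      exact h
    have Tlog : Tendsto (fun ε : ℝ =>
        Real.log (-(slope (fun s => pvHp x s) x (x - ε) / slope (fun s => pvHp x s) x (x + ε))))
        (nhdsWithin 0 (Set.Ioi 0)) (nhds 0) := by
      have hcont := Real.continuousAt_log (show (-1:ℝ) ≠ 0 by norm_num)
      have h := hcont.tendsto.comp ratio
      rw [show Real.log (-1) = 0 by simp] at h
      exact h
    have hδ : Set.Ioo (0:ℝ) (min (x + 1) (1 - x)) ∈ nhdsWithin (0:ℝ) (Set.Ioi 0) :=
      Ioo_mem_nhdsGT_of_mem ⟨le_rfl, lt_min (by linarith) (by linarith)⟩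
    have T2 : Tendsto (fun ε : ℝ =>
        Real.log (pvHp x (x - ε)) - Real.log (pvHp x (x + ε)))
        (nhdsWithin 0 (Set.Ioi 0)) (nhds 0) := by
      refine Tlog.congr' ?_
      filter_upwards [hδ] with ε hε
      obtain ⟨hε0, hεδ⟩ := hε
      have hε1 : ε < x + 1 := lt_of_lt_of_le hεδ (min_le_left _ _)
      have hε2 : ε < 1 - x := lt_of_lt_of_le hεδ (min_le_right _ _)
      have hne1 : pvHp x (x - ε) ≠ 0 :=
        pvHp_ne x hx1 hx2 hx0 (by linarith) (by linarith) (by intro h; nlinarith [h])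
      have hne2 : pvHp x (x + ε) ≠ 0 :=
        pvHp_ne x hx1 hx2 hx0 (by linarith) (by linarith) (by intro h; nlinarith [h])
      have hsl1 : slope (fun s => pvHp x s) x (x - ε) = pvHp x (x - ε) / (-ε) := by
        rw [slope_def_field, hpx0]
        ring_nf
      have hsl2 : slope (fun s => pvHp x s) x (x + ε) = pvHp x (x + ε) / ε := by
        rw [slope_def_field, hpx0]
        ring_nf
      rw [hsl1, hsl2,
        show -(pvHp x (x - ε) / (-ε) / (pvHp x (x + ε) / ε))
          = pvHp x (x - ε) / pvHp x (x + ε) by field_simp,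
        Real.log_div hne1 hne2]
    -- combine
    have hfinal := T1.add (T2.const_mul (x * w))
    rw [show (0:ℝ) + x * w * 0 = 0 by ring] at hfinal
    refine hfinal.congr fun ε => ?_
    simp only [pvF]
    ring

theorem stmt_2 (x : ℝ) (hx : x ∈ Set.Ioo (-1 : ℝ) 1) :
    Tendsto (fun ε : ℝ =>
        (∫ t in (-1 : ℝ)..(x - ε), Real.sqrt (1 - t ^ 2) * t / (t - x)) +
        ∫ t in (x + ε)..(1 : ℝ), Real.sqrt (1 - t ^ 2) * t / (t - x))
      (nhdsWithin 0 (Set.Ioi 0)) (nhds (-Real.pi * x ^ 2 + Real.pi / 2)) := by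
  obtain ⟨hx1, hx2⟩ := hx
  have hδ : Set.Ioo (0:ℝ) (min (x + 1) (1 - x)) ∈ nhdsWithin (0:ℝ) (Set.Ioi 0) :=
    Ioo_mem_nhdsGT_of_mem ⟨le_rfl, lt_min (by linarith) (by linarith)⟩
  have hconv : Tendsto (fun ε : ℝ =>
      (pvF x 1 - pvF x (-1)) + (pvF x (x - ε) - pvF x (x + ε)))
      (nhdsWithin 0 (Set.Ioi 0)) (nhds (-Real.pi * x ^ 2 + Real.pi / 2)) := by
    have h := (tendsto_const_nhds (x := pvF x 1 - pvF x (-1))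
      (f := nhdsWithin (0:ℝ) (Set.Ioi 0))).add (pvF_limit x hx1 hx2)
    rw [add_zero] at h
    rw [← pvF_boundary x hx1 hx2]
    exact h
  refine hconv.congr' ?_
  filter_upwards [hδ] with ε hε
  obtain ⟨hε0, hεδ⟩ := hε
  have hε1 : ε < x + 1 := lt_of_lt_of_le hεδ (min_le_left _ _)
  have hε2 : ε < 1 - x := lt_of_lt_of_le hεδ (min_le_right _ _)
  have hI1 : (∫ t in (-1 : ℝ)..(x - ε), Real.sqrt (1 - t ^ 2) * t / (t - x))
      = pvF x (x - ε) - pvF x (-1) := by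
    apply intervalIntegral.integral_eq_sub_of_hasDerivAt_of_le (by linarith)
    · apply (pvF_continuousOn x hx1 hx2).mono
      intro t ht
      exact ⟨⟨ht.1, by linarith [ht.2]⟩, by
        simp only [Set.mem_singleton_iff]; intro h; linarith [ht.2]⟩
    · intro t ht
      exact pvF_hasDerivAt x hx1 hx2 ht.1 (by linarith [ht.2]) (by intro h; linarith [ht.2])
    · apply ContinuousOn.intervalIntegrable
      rw [Set.uIcc_of_le (by linarith)]
      apply ContinuousOn.div
      · apply Continuous.continuousOn
        fun_prop
      · fun_prop
      · intro t ht
        have : t < x := by linarith [ht.2]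
        exact sub_ne_zero.2 this.ne
  have hI2 : (∫ t in (x + ε)..(1 : ℝ), Real.sqrt (1 - t ^ 2) * t / (t - x))
      = pvF x 1 - pvF x (x + ε) := by
    apply intervalIntegral.integral_eq_sub_of_hasDerivAt_of_le (by linarith)
    · apply (pvF_continuousOn x hx1 hx2).mono
      intro t ht
      exact ⟨⟨by linarith [ht.1], ht.2⟩, by
        simp only [Set.mem_singleton_iff]; intro h; linarith [ht.1]⟩
    · intro t ht
      exact pvF_hasDerivAt x hx1 hx2 (by linarith [ht.1]) ht.2 (by intro h; linarith [ht.1])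
    · apply ContinuousOn.intervalIntegrable
      rw [Set.uIcc_of_le (by linarith)]
      apply ContinuousOn.div
      · apply Continuous.continuousOn
        fun_prop
      · fun_prop
      · intro t ht
        have : x < t := by linarith [ht.1]
        exact sub_ne_zero.2 this.ne'
  rw [hI1, hI2]
  ring
end

section
/- For x ∈ (-1,1), the Hadamard finite part of ∫_{-1}^{1} √(1-t²)/(t-x)² dt equals -π; that is, lim_{ε→0⁺}[∫_{-1}^{x-ε} √(1-t²)/(t-x)² dt + ∫_{x+ε}^{1} √(1-t²)/(t-x)² dt - (√(1-(x+ε)²)+√(1-(x-ε)²))/ε] = -π. -/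
open Real Filter intervalIntegral

noncomputable def Fp (x t : ℝ) : ℝ :=
  Real.sqrt (1 - t ^ 2) / (x - t) - Real.arcsin t +
    x / Real.sqrt (1 - x ^ 2) *
      (Real.log (1 - x * t + Real.sqrt (1 - x ^ 2) * Real.sqrt (1 - t ^ 2)) - Real.log (t - x))

lemma Fp_deriv (x t : ℝ) (hx1 : -1 < x) (hx2 : x < 1) (ht1 : -1 < t) (ht2 : t < 1)
    (hne : t ≠ x) :
    HasDerivAt (Fp x) (Real.sqrt (1 - t ^ 2) / (t - x) ^ 2) t := by
  have hq2 : Real.sqrt (1 - x ^ 2) ^ 2 = 1 - x ^ 2 := Real.sq_sqrt (by nlinarith)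
  have hq0 : 0 < Real.sqrt (1 - x ^ 2) := Real.sqrt_pos.2 (by nlinarith)
  have hs2 : Real.sqrt (1 - t ^ 2) ^ 2 = 1 - t ^ 2 := Real.sq_sqrt (by nlinarith)
  have hs0 : 0 < Real.sqrt (1 - t ^ 2) := Real.sqrt_pos.2 (by nlinarith)
  have htx : t - x ≠ 0 := sub_ne_zero.2 hne
  have hxt : x - t ≠ 0 := sub_ne_zero.2 (Ne.symm hne)
  have hA : 0 < 1 - x * t + Real.sqrt (1 - x ^ 2) * Real.sqrt (1 - t ^ 2) := by
    nlinarith [mul_pos (sub_pos.2 hx2) (by linarith : (0:ℝ) < 1 + t),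
      mul_pos (by linarith : (0:ℝ) < 1 + x) (sub_pos.2 ht2),
      mul_pos hq0 hs0]
  have h1 : HasDerivAt (fun u : ℝ => 1 - u ^ 2) (-(2 * t)) t := by
    simpa using (hasDerivAt_pow 2 t).const_sub 1
  have hS : HasDerivAt (fun u : ℝ => Real.sqrt (1 - u ^ 2))
      (1 / (2 * Real.sqrt (1 - t ^ 2)) * -(2 * t)) t :=
    (Real.hasDerivAt_sqrt (by nlinarith)).comp t h1
  have hd1 : HasDerivAt (fun u : ℝ => Real.sqrt (1 - u ^ 2) / (x - u))
      ((1 / (2 * Real.sqrt (1 - t ^ 2)) * -(2 * t) * (x - t) -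
        Real.sqrt (1 - t ^ 2) * -1) / (x - t) ^ 2) t :=
    hS.div ((hasDerivAt_id t).const_sub x) hxt
  have hd2 : HasDerivAt Real.arcsin (1 / Real.sqrt (1 - t ^ 2)) t :=
    Real.hasDerivAt_arcsin (by linarith) (by linarith)
  have hAin : HasDerivAt (fun u : ℝ => 1 - x * u + Real.sqrt (1 - x ^ 2) * Real.sqrt (1 - u ^ 2))
      (-x + Real.sqrt (1 - x ^ 2) * (1 / (2 * Real.sqrt (1 - t ^ 2)) * -(2 * t))) t := by
    have h2 : HasDerivAt (fun u : ℝ => 1 - x * u) (-x) t := by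
      simpa using ((hasDerivAt_id t).const_mul x).const_sub 1
    exact h2.add (hS.const_mul _)
  have hlogA : HasDerivAt
      (fun u : ℝ => Real.log (1 - x * u + Real.sqrt (1 - x ^ 2) * Real.sqrt (1 - u ^ 2)))
      ((1 - x * t + Real.sqrt (1 - x ^ 2) * Real.sqrt (1 - t ^ 2))⁻¹ *
        (-x + Real.sqrt (1 - x ^ 2) * (1 / (2 * Real.sqrt (1 - t ^ 2)) * -(2 * t)))) t :=
    by have := (Real.hasDerivAt_log hA.ne').comp t hAin; exact this
  have hlogtx : HasDerivAt (fun u : ℝ => Real.log (u - x)) ((t - x)⁻¹ * 1) t :=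
    by have := (Real.hasDerivAt_log htx).comp t ((hasDerivAt_id t).sub_const x); exact this
  have := (hd1.sub hd2).add (((hlogA.sub hlogtx).const_mul (x / Real.sqrt (1 - x ^ 2))))
  refine HasDerivAt.congr_deriv this (Eq.symm ?_)
  set s := Real.sqrt (1 - t ^ 2)
  set q := Real.sqrt (1 - x ^ 2)
  have key : (x*s + q*t)*(t-x) + s*(1 - x*t + q*s) = q*(1 - x*t + q*s) := by
    linear_combination q * hs2 - s * hq2
  have hAne : 1 - x * t + q * s ≠ 0 := hA.ne'
  field_simp
  rw [show (t - x) * (-(s * x) + -(t * q)) / (1 - t * x + s * q) = s - q by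
    rw [div_eq_iff (ne_of_gt (by linarith))]; linear_combination -key]
  ring

lemma Fp_cont (x a b : ℝ) (hx1 : -1 < x) (hx2 : x < 1)
    (hab : Set.Icc a b ⊆ Set.Icc (-1 : ℝ) 1) (hne : ∀ t ∈ Set.Icc a b, t ≠ x) :
    ContinuousOn (Fp x) (Set.Icc a b) := by
  have hq0 : 0 < Real.sqrt (1 - x ^ 2) := Real.sqrt_pos.2 (by nlinarith)
  have hS : Continuous fun t : ℝ => Real.sqrt (1 - t ^ 2) := by
    exact Real.continuous_sqrt.comp (by continuity)
  apply ContinuousOn.add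
  · apply ContinuousOn.sub
    · apply ContinuousOn.div hS.continuousOn
        (Continuous.continuousOn (by continuity : Continuous fun t : ℝ => x - t))
      intro t ht
      have := hne t ht
      intro h
      exact this (by linarith [sub_eq_zero.1 h])
    · exact Real.continuous_arcsin.continuousOn
  · apply ContinuousOn.mul continuousOn_const
    apply ContinuousOn.sub
    · apply ContinuousOn.log
        (Continuous.continuousOn (by fun_prop :
          Continuous fun t : ℝ => 1 - x * t + Real.sqrt (1 - x ^ 2) * Real.sqrt (1 - t ^ 2)))
      intro t ht
      have ht' := hab ht
      have h1 : -1 ≤ t := ht'.1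
      have h2 : t ≤ 1 := ht'.2
      have hs0 : 0 ≤ Real.sqrt (1 - t ^ 2) := Real.sqrt_nonneg _
      have : 0 < 1 - x * t := by
        nlinarith [sq_nonneg (x - t), mul_nonneg (by linarith : (0:ℝ) ≤ 1 - t)
          (by linarith : (0:ℝ) ≤ 1 + t), mul_pos (by linarith : (0:ℝ) < 1 - x)
          (by linarith : (0:ℝ) < 1 + x)]
      positivity
    · apply ContinuousOn.log
        (Continuous.continuousOn (by continuity : Continuous fun t : ℝ => t - x))
      intro t ht
      exact sub_ne_zero.2 (hne t ht)

lemma integrable_f (x a b : ℝ) (hab : ∀ t ∈ Set.uIcc a b, t ≠ x) :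
    IntervalIntegrable (fun t => Real.sqrt (1 - t ^ 2) / (t - x) ^ 2)
      MeasureTheory.volume a b := by
  apply ContinuousOn.intervalIntegrable
  apply ContinuousOn.div
  · exact (Real.continuous_sqrt.comp (by continuity)).continuousOn
  · exact Continuous.continuousOn (by continuity : Continuous fun t : ℝ => (t - x) ^ 2)
  · intro t ht
    exact pow_ne_zero _ (sub_ne_zero.2 (hab t ht))

lemma ftc_left (x ε : ℝ) (hx1 : -1 < x) (hx2 : x < 1) (hε : 0 < ε) (hε1 : ε < 1 + x) :
    (∫ t in (-1 : ℝ)..(x - ε), Real.sqrt (1 - t ^ 2) / (t - x) ^ 2) =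
      Fp x (x - ε) - Fp x (-1) := by
  have hab : (-1 : ℝ) ≤ x - ε := by linarith
  apply intervalIntegral.integral_eq_sub_of_hasDeriv_right_of_le hab
  · apply Fp_cont x _ _ hx1 hx2
    · intro t ht; exact ⟨ht.1, by linarith [ht.2]⟩
    · intro t ht; intro h; rw [h] at ht; linarith [ht.2]
  · intro t ht
    exact (Fp_deriv x t hx1 hx2 (by linarith [ht.1]) (by linarith [ht.2])
      (by intro h; rw [h] at ht; linarith [ht.2])).hasDerivWithinAt
  · apply integrable_f
    intro t ht
    rw [Set.uIcc_of_le hab] at ht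
    intro h; rw [h] at ht; linarith [ht.2]

lemma ftc_right (x ε : ℝ) (hx1 : -1 < x) (hx2 : x < 1) (hε : 0 < ε) (hε1 : ε < 1 - x) :
    (∫ t in (x + ε)..(1 : ℝ), Real.sqrt (1 - t ^ 2) / (t - x) ^ 2) =
      Fp x 1 - Fp x (x + ε) := by
  have hab : x + ε ≤ 1 := by linarith
  apply intervalIntegral.integral_eq_sub_of_hasDeriv_right_of_le hab
  · apply Fp_cont x _ _ hx1 hx2
    · intro t ht; exact ⟨by linarith [ht.1], ht.2⟩
    · intro t ht; intro h; rw [h] at ht; linarith [ht.1]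
  · intro t ht
    exact (Fp_deriv x t hx1 hx2 (by linarith [ht.1]) ht.2
      (by intro h; rw [h] at ht; linarith [ht.1])).hasDerivWithinAt
  · apply integrable_f
    intro t ht
    rw [Set.uIcc_of_le hab] at ht
    intro h; rw [h] at ht; linarith [ht.1]

lemma Fp_neg_one (x : ℝ) : Fp x (-1) = Real.pi / 2 := by
  have h0 : (1 : ℝ) - (-1 : ℝ) ^ 2 = 0 := by norm_num
  have h1 : (-1 : ℝ) - x = -(1 + x) := by ring
  simp only [Fp, h0, h1, Real.sqrt_zero, Real.arcsin_neg_one, Real.log_neg_eq_log, mul_zero,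
    zero_div, add_zero]
  have : 1 - x * (-1) = 1 + x := by ring
  rw [this]
  ring

lemma Fp_one (x : ℝ) : Fp x 1 = -(Real.pi / 2) := by
  have h0 : (1 : ℝ) - (1 : ℝ) ^ 2 = 0 := by norm_num
  simp only [Fp, h0, Real.sqrt_zero, Real.arcsin_one, mul_zero, zero_div, add_zero]
  have : 1 - x * 1 = 1 - x := by ring
  rw [this, show (1 : ℝ) - x = 1 - x from rfl]
  ring

theorem stmt_7 (x : ℝ) (hx : x ∈ Set.Ioo (-1 : ℝ) 1) :
    Tendsto (fun ε : ℝ =>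
        (∫ t in (-1 : ℝ)..(x - ε), Real.sqrt (1 - t ^ 2) / (t - x) ^ 2) +
        (∫ t in (x + ε)..(1 : ℝ), Real.sqrt (1 - t ^ 2) / (t - x) ^ 2) -
        (Real.sqrt (1 - (x + ε) ^ 2) + Real.sqrt (1 - (x - ε) ^ 2)) / ε)
      (nhdsWithin 0 (Set.Ioi 0)) (nhds (-Real.pi)) := by
  obtain ⟨hx1, hx2⟩ := hx
  set q := Real.sqrt (1 - x ^ 2) with hq
  have hq2 : q ^ 2 = 1 - x ^ 2 := Real.sq_sqrt (by nlinarith)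
  have hq0 : 0 < q := Real.sqrt_pos.2 (by nlinarith)
  set Af : ℝ → ℝ := fun u => 1 - x * u + q * Real.sqrt (1 - u ^ 2) with hAf
  set g : ℝ → ℝ := fun ε =>
    (Real.arcsin (x + ε) - Real.arcsin (x - ε)) +
      x / q * (Real.log (Af (x - ε)) - Real.log (Af (x + ε))) with hg
  have hδ : 0 < min (1 + x) (1 - x) := lt_min (by linarith) (by linarith)
  have hev : (fun ε : ℝ =>
        (∫ t in (-1 : ℝ)..(x - ε), Real.sqrt (1 - t ^ 2) / (t - x) ^ 2) +
        (∫ t in (x + ε)..(1 : ℝ), Real.sqrt (1 - t ^ 2) / (t - x) ^ 2) -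
        (Real.sqrt (1 - (x + ε) ^ 2) + Real.sqrt (1 - (x - ε) ^ 2)) / ε)
      =ᶠ[nhdsWithin 0 (Set.Ioi 0)] fun ε => -Real.pi + g ε := by
    filter_upwards [Ioo_mem_nhdsGT_of_mem (Set.left_mem_Ico.2 hδ)] with ε hε
    obtain ⟨hε0, hεδ⟩ := hε
    have hε1 : ε < 1 + x := lt_of_lt_of_le hεδ (min_le_left _ _)
    have hε2 : ε < 1 - x := lt_of_lt_of_le hεδ (min_le_right _ _)
    rw [ftc_left x ε hx1 hx2 hε0 hε1, ftc_right x ε hx1 hx2 hε0 hε2, Fp_neg_one, Fp_one]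
    simp only [Fp, hg]
    have e1 : x - (x - ε) = ε := by ring
    have e2 : x - ε - x = -ε := by ring
    have e3 : x - (x + ε) = -ε := by ring
    have e4 : x + ε - x = ε := by ring
    rw [e1, e2, e3, e4, Real.log_neg_eq_log]
    have hεne : ε ≠ 0 := ne_of_gt hε0
    have hd : Real.sqrt (1 - (x + ε) ^ 2) / -ε = -(Real.sqrt (1 - (x + ε) ^ 2) / ε) := by
      rw [div_neg]
    rw [hd]
    simp only [hAf]
    rw [← hq]
    field_simp
    ring
  have hgt : Tendsto g (nhdsWithin 0 (Set.Ioi 0)) (nhds 0) := by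
    have hAfc : Continuous Af := by
      apply Continuous.add (by continuity)
      exact continuous_const.mul (Real.continuous_sqrt.comp (by continuity))
    have hAfx : 0 < Af x := by
      simp only [hAf, ← hq]
      nlinarith [Real.sq_sqrt (show (0:ℝ) ≤ 1 - x ^ 2 by nlinarith),
        Real.sqrt_pos.2 (show (0:ℝ) < 1 - x ^ 2 by nlinarith)]
    have h1 : Tendsto (fun ε : ℝ => x + ε) (nhds 0) (nhds x) := by
      simpa using (continuous_add_left x).tendsto (0 : ℝ)
    have h2 : Tendsto (fun ε : ℝ => x - ε) (nhds 0) (nhds x) := by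
      simpa using (continuous_sub_left x).tendsto (0 : ℝ)
    have hlog : ContinuousAt Real.log (Af x) := Real.continuousAt_log (ne_of_gt hAfx)
    have hl1 : Tendsto (fun ε : ℝ => Real.log (Af (x + ε))) (nhds 0) (nhds (Real.log (Af x))) :=
      hlog.tendsto.comp (hAfc.continuousAt.tendsto.comp h1)
    have hl2 : Tendsto (fun ε : ℝ => Real.log (Af (x - ε))) (nhds 0) (nhds (Real.log (Af x))) :=
      hlog.tendsto.comp (hAfc.continuousAt.tendsto.comp h2)
    have ha1 : Tendsto (fun ε : ℝ => Real.arcsin (x + ε)) (nhds 0) (nhds (Real.arcsin x)) :=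
      Real.continuous_arcsin.continuousAt.tendsto.comp h1
    have ha2 : Tendsto (fun ε : ℝ => Real.arcsin (x - ε)) (nhds 0) (nhds (Real.arcsin x)) :=
      Real.continuous_arcsin.continuousAt.tendsto.comp h2
    have := (ha1.sub ha2).add ((hl2.sub hl1).const_mul (x / q))
    simp only [sub_self, mul_zero, add_zero] at this
    exact this.mono_left nhdsWithin_le_nhds
  have hfinal : Tendsto (fun ε => -Real.pi + g ε) (nhdsWithin 0 (Set.Ioi 0))
      (nhds (-Real.pi)) := by
    simpa using tendsto_const_nhds.add hgt
  exact hfinal.congr' hev.symm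
end

section
/- If ψ : [-1,1] → ℝ is a polynomial of degree m (restricted to [-1,1]), then the principal value integral x ↦ ∫_{-1}^{1} √(1-t²)ψ(t)/(t-x) dt is a polynomial in x of degree at most m+1 on (-1,1). -/
open Real Filter Polynomial intervalIntegral Set MeasureTheory

noncomputable def Kfun (x t : ℝ) : ℝ :=
  Real.sqrt (1 - t^2) - x * Real.arcsin t
    - Real.sqrt (1 - x^2) * (Real.log (1 - x*t + Real.sqrt (1 - x^2) * Real.sqrt (1 - t^2)) - Real.log (t - x))

lemma Kfun_deriv {x : ℝ} (hx : x ∈ Set.Ioo (-1:ℝ) 1) {t : ℝ} (ht : t ∈ Set.Ioo (-1:ℝ) 1) (htx : t ≠ x) :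
    HasDerivAt (Kfun x) (Real.sqrt (1 - t^2) / (t - x)) t := by
  obtain ⟨hx1, hx2⟩ := hx
  obtain ⟨ht1, ht2⟩ := ht
  have h1t : (0:ℝ) < 1 - t^2 := by nlinarith
  have h1x : (0:ℝ) < 1 - x^2 := by nlinarith
  set u := Real.sqrt (1 - t^2) with hu
  set s := Real.sqrt (1 - x^2) with hs
  have hu0 : 0 < u := Real.sqrt_pos.2 h1t
  have hs0 : 0 < s := Real.sqrt_pos.2 h1x
  have hu2 : u^2 = 1 - t^2 := Real.sq_sqrt h1t.le
  have hs2 : s^2 = 1 - x^2 := Real.sq_sqrt h1x.le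
  have hxt : x * t < 1 := by nlinarith
  have hA0 : (0:ℝ) < 1 - x*t + s*u := by nlinarith
  have htx' : t - x ≠ 0 := sub_ne_zero.2 htx
  have d1 : HasDerivAt (fun t : ℝ => 1 - t^2) (-(2*t)) t := by
    simpa using (hasDerivAt_pow 2 t).const_sub 1
  have dsq : HasDerivAt (fun t : ℝ => Real.sqrt (1 - t^2)) (-(2*t) / (2 * u)) t :=
    d1.sqrt h1t.ne'
  have darcsin : HasDerivAt (fun t : ℝ => x * Real.arcsin t) (x * (1 / u)) t :=
    (Real.hasDerivAt_arcsin ht1.ne' ht2.ne).const_mul x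
  have dA : HasDerivAt (fun t : ℝ => 1 - x*t + s * Real.sqrt (1 - t^2))
      (-x + s * (-(2*t) / (2 * u))) t := by
    have : HasDerivAt (fun t : ℝ => 1 - x*t) (-x) t := by
      simpa using ((hasDerivAt_id t).const_mul x).const_sub 1
    exact this.add (dsq.const_mul s)
  have dlogA : HasDerivAt (fun t : ℝ => Real.log (1 - x*t + s * Real.sqrt (1 - t^2)))
      ((-x + s * (-(2*t) / (2 * u))) / (1 - x*t + s*u)) t := dA.log hA0.ne'
  have dlogtx : HasDerivAt (fun t : ℝ => Real.log (t - x)) (1/(t-x)) t := by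
    simpa using ((hasDerivAt_id t).sub_const x).log htx'
  have := (dsq.sub darcsin).sub ((dlogA.sub dlogtx).const_mul s)
  convert this using 1
  · rfl
  · rfl
  · rfl
  field_simp [hA0.ne']
  have key : (t - x) * (-(u * x) + -(t * s)) / (1 - t * x + u * s) = u - s := by
    rw [div_eq_iff (by nlinarith)]
    linear_combination (-s) * hu2 + u * hs2
  rw [key]
  linear_combination hu2 - hs2



-- continuity of Kfun away from x
lemma Kfun_contOn {x : ℝ} (hx : x ∈ Set.Ioo (-1:ℝ) 1) {S : Set ℝ}
    (hS : ∀ t ∈ S, t ≠ x) (hS' : S ⊆ Set.Icc (-1:ℝ) 1) :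
    ContinuousOn (Kfun x) S := by
  obtain ⟨hx1, hx2⟩ := hx
  have hs0 : 0 < Real.sqrt (1 - x^2) := Real.sqrt_pos.2 (by nlinarith)
  have hA : ∀ t ∈ S, (0:ℝ) < 1 - x*t + Real.sqrt (1 - x^2) * Real.sqrt (1 - t^2) := by
    intro t ht
    obtain ⟨ht1, ht2⟩ := hS' ht
    have h1 : (0:ℝ) ≤ Real.sqrt (1 - x^2) * Real.sqrt (1 - t^2) :=
      mul_nonneg (Real.sqrt_nonneg _) (Real.sqrt_nonneg _)
    have h2 : x*t ≤ |x| := by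
      calc x*t ≤ |x*t| := le_abs_self _
        _ = |x| * |t| := abs_mul x t
        _ ≤ |x| * 1 := by
            exact mul_le_mul_of_nonneg_left (abs_le.2 ⟨ht1, ht2⟩) (abs_nonneg x)
        _ = |x| := mul_one _
    have h3 : |x| < 1 := abs_lt.2 ⟨hx1, hx2⟩
    nlinarith
  have c1 : Continuous fun t : ℝ => Real.sqrt (1 - t^2) :=
    (continuous_const.sub (continuous_pow 2)).sqrt
  apply ContinuousOn.sub
  apply ContinuousOn.sub
  · exact c1.continuousOn
  · exact (continuous_const.mul Real.continuous_arcsin).continuousOn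
  · apply ContinuousOn.mul continuousOn_const
    apply ContinuousOn.sub
    · exact ContinuousOn.log
        ((continuous_const.sub (continuous_const.mul continuous_id)).continuousOn.add
          (continuous_const.mul c1).continuousOn)
        (fun t ht => (hA t ht).ne')
    · exact ContinuousOn.log (continuous_id.sub continuous_const).continuousOn
        (fun t ht => sub_ne_zero.2 (hS t ht))



lemma K1val {x : ℝ} : Kfun x 1 = -(x*(Real.pi/2)) := by
  unfold Kfun
  norm_num [Real.arcsin_one]

lemma K2val {x : ℝ} : Kfun x (-1) = x*(Real.pi/2) := by
  unfold Kfun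
  rw [show (-1:ℝ) - x = -(1+x) by ring, Real.log_neg_eq_log]
  norm_num [Real.arcsin_neg_one]

-- continuity helper
lemma contOn_aux (x : ℝ) (j : ℕ) {S : Set ℝ} (hS : ∀ t ∈ S, t ≠ x) :
    ContinuousOn (fun t : ℝ => Real.sqrt (1 - t^2) * t^j / (t - x)) S := by
  apply ContinuousOn.div
  · exact (((continuous_const.sub (continuous_pow 2)).sqrt).mul (continuous_pow j)).continuousOn
  · exact (continuous_id.sub continuous_const).continuousOn
  · exact fun t ht => sub_ne_zero.2 (hS t ht)

lemma ne_left {x : ℝ} (hx1 : -1 < x) {ε : ℝ} (hε : 0 < ε) :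
    ∀ t ∈ Set.uIcc (-1:ℝ) (x - ε), t ≠ x := by
  intro t ht
  rcases Set.mem_uIcc.1 ht with h | h
  · exact ne_of_lt (lt_of_le_of_lt h.2 (by linarith))
  · exact ne_of_lt (lt_of_le_of_lt h.2 hx1)

lemma ne_right {x : ℝ} (hx2 : x < 1) {ε : ℝ} (hε : 0 < ε) :
    ∀ t ∈ Set.uIcc (x + ε) (1:ℝ), t ≠ x := by
  intro t ht
  rcases Set.mem_uIcc.1 ht with h | h
  · exact (ne_of_lt (lt_of_lt_of_le (by linarith) h.1)).symm
  · exact (ne_of_lt (lt_of_lt_of_le hx2 h.1)).symm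

noncomputable def Phi (x : ℝ) (ε : ℝ) : ℝ :=
  (Real.sqrt (1-(x-ε)^2) - Real.sqrt (1-(x+ε)^2)) - x*(Real.arcsin (x-ε) - Real.arcsin (x+ε))
    - Real.sqrt (1-x^2) * (Real.log (1-x*(x-ε)+Real.sqrt (1-x^2)*Real.sqrt (1-(x-ε)^2))
        - Real.log (1-x*(x+ε)+Real.sqrt (1-x^2)*Real.sqrt (1-(x+ε)^2)))

lemma pv0 {x : ℝ} (hx : x ∈ Set.Ioo (-1:ℝ) 1) :
    Tendsto (fun ε : ℝ =>
        (∫ t in (-1:ℝ)..(x - ε), Real.sqrt (1 - t^2) / (t - x)) +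
        ∫ t in (x + ε)..(1:ℝ), Real.sqrt (1 - t^2) / (t - x))
      (nhdsWithin 0 (Set.Ioi 0)) (nhds (-(Real.pi * x))) := by
  obtain ⟨hx1, hx2⟩ := hx
  set δ : ℝ := min (x+1) (1-x) with hδdef
  have hδ : 0 < δ := lt_min (by linarith) (by linarith)
  -- Step A : formula for the truncated integrals
  have stepA : ∀ ε ∈ Set.Ioo (0:ℝ) δ,
      (∫ t in (-1:ℝ)..(x - ε), Real.sqrt (1 - t^2) / (t - x)) +
        (∫ t in (x + ε)..(1:ℝ), Real.sqrt (1 - t^2) / (t - x)) = -(Real.pi * x) + Phi x ε := by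
    intro ε ⟨hε0, hεδ⟩
    have hεa : ε < x + 1 := lt_of_lt_of_le hεδ (min_le_left _ _)
    have hεb : ε < 1 - x := lt_of_lt_of_le hεδ (min_le_right _ _)
    have I1 : (∫ t in (-1:ℝ)..(x - ε), Real.sqrt (1 - t^2) / (t - x))
        = Kfun x (x - ε) - Kfun x (-1) := by
      apply intervalIntegral.integral_eq_sub_of_hasDeriv_right_of_le (by linarith)
      · apply Kfun_contOn ⟨hx1, hx2⟩
        · exact fun t ht => ne_of_lt (lt_of_le_of_lt ht.2 (by linarith))
        · exact Set.Icc_subset_Icc le_rfl (by linarith)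
      · intro t ht
        exact (Kfun_deriv ⟨hx1, hx2⟩ ⟨ht.1, by linarith [ht.2]⟩
          (ne_of_lt (by linarith [ht.2]))).hasDerivWithinAt
      · apply ContinuousOn.intervalIntegrable
        apply ContinuousOn.div
        · exact ((continuous_const.sub (continuous_pow 2)).sqrt).continuousOn
        · exact (continuous_id.sub continuous_const).continuousOn
        · exact fun t ht => sub_ne_zero.2 (ne_left hx1 hε0 t ht)
    have I2 : (∫ t in (x + ε)..(1:ℝ), Real.sqrt (1 - t^2) / (t - x))
        = Kfun x 1 - Kfun x (x + ε) := by
      apply intervalIntegral.integral_eq_sub_of_hasDeriv_right_of_le (by linarith)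
      · apply Kfun_contOn ⟨hx1, hx2⟩
        · exact fun t ht => (ne_of_lt (lt_of_lt_of_le (by linarith) ht.1)).symm
        · exact Set.Icc_subset_Icc (by linarith) le_rfl
      · intro t ht
        exact (Kfun_deriv ⟨hx1, hx2⟩ ⟨by linarith [ht.1], ht.2⟩
          ((ne_of_lt (by linarith [ht.1])).symm)).hasDerivWithinAt
      · apply ContinuousOn.intervalIntegrable
        apply ContinuousOn.div
        · exact ((continuous_const.sub (continuous_pow 2)).sqrt).continuousOn
        · exact (continuous_id.sub continuous_const).continuousOn
        · exact fun t ht => sub_ne_zero.2 (ne_right hx2 hε0 t ht)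
    have Kdiff : Kfun x (x - ε) - Kfun x (x + ε) = Phi x ε := by
      unfold Kfun Phi
      rw [show x - ε - x = -ε by ring, show x + ε - x = ε by ring, Real.log_neg_eq_log]
      ring
    rw [I1, I2, K1val, K2val]
    linarith [Kdiff]
  -- Step B : Phi tends to 0
  have hA0 : (0:ℝ) < 1 - x*x + Real.sqrt (1-x^2)*Real.sqrt (1-x^2) := by
    have : Real.sqrt (1-x^2)*Real.sqrt (1-x^2) = 1 - x^2 :=
      Real.mul_self_sqrt (by nlinarith)
    nlinarith
  have hcont : ContinuousAt (Phi x) 0 := by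
    have c1 : Continuous fun t : ℝ => Real.sqrt (1 - t^2) :=
      (continuous_const.sub (continuous_pow 2)).sqrt
    have cm : Continuous fun ε : ℝ => x - ε := continuous_const.sub continuous_id
    have cp : Continuous fun ε : ℝ => x + ε := continuous_const.add continuous_id
    have csm : Continuous fun ε : ℝ => Real.sqrt (1-(x-ε)^2) := c1.comp cm
    have csp : Continuous fun ε : ℝ => Real.sqrt (1-(x+ε)^2) := c1.comp cp
    have cam : Continuous fun ε : ℝ => 1-x*(x-ε)+Real.sqrt (1-x^2)*Real.sqrt (1-(x-ε)^2) :=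
      (continuous_const.sub (continuous_const.mul cm)).add (continuous_const.mul csm)
    have cap : Continuous fun ε : ℝ => 1-x*(x+ε)+Real.sqrt (1-x^2)*Real.sqrt (1-(x+ε)^2) :=
      (continuous_const.sub (continuous_const.mul cp)).add (continuous_const.mul csp)
    apply ContinuousAt.sub
    apply ContinuousAt.sub
    · exact (csm.continuousAt).sub (csp.continuousAt)
    · exact continuousAt_const.mul
        (((Real.continuous_arcsin.comp cm).continuousAt).sub
          ((Real.continuous_arcsin.comp cp).continuousAt))
    · apply continuousAt_const.mul
      apply ContinuousAt.sub
      · exact ContinuousAt.log cam.continuousAt (by simpa using hA0.ne')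
      · exact ContinuousAt.log cap.continuousAt (by simpa using hA0.ne')
  have hPhi0 : Phi x 0 = 0 := by unfold Phi; norm_num
  have stepB : Tendsto (Phi x) (nhdsWithin 0 (Set.Ioi 0)) (nhds 0) := by
    have h := (hcont.tendsto).mono_left (nhdsWithin_le_nhds (s := Set.Ioi (0:ℝ)))
    rwa [hPhi0] at h
  -- combine
  have : Tendsto (fun ε => -(Real.pi * x) + Phi x ε) (nhdsWithin 0 (Set.Ioi 0))
      (nhds (-(Real.pi * x))) := by
    simpa using (tendsto_const_nhds.add stepB)
  apply this.congr'
  filter_upwards [Ioo_mem_nhdsGT hδ] with ε hε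
  exact (stepA ε hε).symm

noncomputable def cj (j : ℕ) : ℝ := ∫ t in (-1:ℝ)..1, Real.sqrt (1 - t^2) * t^j

noncomputable def pvM : ℕ → Polynomial ℝ
  | 0 => -(Polynomial.C Real.pi * Polynomial.X)
  | (j+1) => Polynomial.C (cj j) + Polynomial.X * pvM j

lemma pvM_deg (j : ℕ) : (pvM j).natDegree ≤ j + 1 := by
  induction j with
  | zero =>
    show (-(Polynomial.C Real.pi * Polynomial.X)).natDegree ≤ 1
    rw [natDegree_neg]
    exact (natDegree_C_mul_le _ _).trans natDegree_X_le
  | succ j ih =>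
    show (Polynomial.C (cj j) + Polynomial.X * pvM j).natDegree ≤ j + 2
    apply (natDegree_add_le _ _).trans
    apply max_le (by simp)
    apply (natDegree_mul_le).trans
    have := natDegree_X_le (R := ℝ)
    omega

lemma keyT (j : ℕ) {x : ℝ} (hx : x ∈ Set.Ioo (-1:ℝ) 1) :
    Tendsto (fun ε : ℝ =>
        (∫ t in (-1:ℝ)..(x - ε), Real.sqrt (1 - t^2) * t^j / (t - x)) +
        ∫ t in (x + ε)..(1:ℝ), Real.sqrt (1 - t^2) * t^j / (t - x))
      (nhdsWithin 0 (Set.Ioi 0)) (nhds ((pvM j).eval x)) := by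
  induction j with
  | zero => simpa [pvM] using pv0 hx
  | succ j ih =>
    obtain ⟨hx1, hx2⟩ := hx
    have hgc : Continuous fun t : ℝ => Real.sqrt (1-t^2) * t^j :=
      ((continuous_const.sub (continuous_pow 2)).sqrt).mul (continuous_pow j)
    have hgint : ∀ a b : ℝ, IntervalIntegrable (fun t => Real.sqrt (1-t^2) * t^j)
        MeasureTheory.volume a b := fun a b => hgc.intervalIntegrable a b
    set P : ℝ → ℝ := fun u => ∫ t in (-1:ℝ)..u, Real.sqrt (1-t^2)*t^j with hPdef
    have hPcont : Continuous P := intervalIntegral.continuous_primitive hgint (-1)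
    have hev : ∀ ε : ℝ, 0 < ε →
        ((∫ t in (-1:ℝ)..(x - ε), Real.sqrt (1 - t^2) * t^(j+1) / (t - x)) +
          ∫ t in (x + ε)..(1:ℝ), Real.sqrt (1 - t^2) * t^(j+1) / (t - x))
        = (P (x-ε) + (cj j - P (x+ε))) +
          x * ((∫ t in (-1:ℝ)..(x - ε), Real.sqrt (1 - t^2) * t^j / (t - x)) +
            ∫ t in (x + ε)..(1:ℝ), Real.sqrt (1 - t^2) * t^j / (t - x)) := by
      intro ε hε
      have hL : (∫ t in (-1:ℝ)..(x - ε), Real.sqrt (1 - t^2) * t^(j+1) / (t - x))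
          = P (x-ε) + x * ∫ t in (-1:ℝ)..(x - ε), Real.sqrt (1 - t^2) * t^j / (t - x) := by
        have h1 : Set.EqOn (fun t : ℝ => Real.sqrt (1-t^2)*t^(j+1)/(t-x))
            (fun t : ℝ => Real.sqrt (1-t^2)*t^j + x*(Real.sqrt (1-t^2)*t^j/(t-x)))
            (Set.uIcc (-1:ℝ) (x-ε)) := by
          intro t ht
          have htx : t - x ≠ 0 := sub_ne_zero.2 (ne_left hx1 hε t ht)
          field_simp
          ring
        rw [intervalIntegral.integral_congr h1,
          intervalIntegral.integral_add (hgint _ _)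
            (((contOn_aux x j (ne_left hx1 hε)).intervalIntegrable).const_mul x),
          intervalIntegral.integral_const_mul]
      have hR : (∫ t in (x + ε)..(1:ℝ), Real.sqrt (1 - t^2) * t^(j+1) / (t - x))
          = (cj j - P (x+ε)) + x * ∫ t in (x + ε)..(1:ℝ), Real.sqrt (1 - t^2) * t^j / (t - x) := by
        have h1 : Set.EqOn (fun t : ℝ => Real.sqrt (1-t^2)*t^(j+1)/(t-x))
            (fun t : ℝ => Real.sqrt (1-t^2)*t^j + x*(Real.sqrt (1-t^2)*t^j/(t-x)))
            (Set.uIcc (x+ε) (1:ℝ)) := by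
          intro t ht
          have htx : t - x ≠ 0 := sub_ne_zero.2 (ne_right hx2 hε t ht)
          field_simp
          ring
        have hadj : P (x+ε) + (∫ t in (x+ε)..(1:ℝ), Real.sqrt (1-t^2)*t^j) = cj j :=
          intervalIntegral.integral_add_adjacent_intervals (hgint _ _) (hgint _ _)
        rw [intervalIntegral.integral_congr h1,
          intervalIntegral.integral_add (hgint _ _)
            (((contOn_aux x j (ne_right hx2 hε)).intervalIntegrable).const_mul x),
          intervalIntegral.integral_const_mul]
        have : (∫ t in (x+ε)..(1:ℝ), Real.sqrt (1-t^2)*t^j) = cj j - P (x+ε) := by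
          linarith [hadj]
        rw [this]
      rw [hL, hR]; ring
    have t1 : Tendsto (fun ε : ℝ => P (x-ε) + (cj j - P (x+ε)))
        (nhdsWithin 0 (Set.Ioi 0)) (nhds (cj j)) := by
      have hc : ContinuousAt (fun ε : ℝ => P (x-ε) + (cj j - P (x+ε))) 0 := by
        apply ContinuousAt.add
        · exact (hPcont.comp (continuous_const.sub continuous_id)).continuousAt
        · exact continuousAt_const.sub
            (hPcont.comp (continuous_const.add continuous_id)).continuousAt
      have h := hc.tendsto.mono_left (nhdsWithin_le_nhds (s := Set.Ioi (0:ℝ)))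
      have h0 : P (x-0) + (cj j - P (x+0)) = cj j := by norm_num
      rwa [h0] at h
    have t2 := ih.const_mul x
    have tot := t1.add t2
    have heval : cj j + x * (pvM j).eval x = (pvM (j+1)).eval x := by
      show _ = (Polynomial.C (cj j) + Polynomial.X * pvM j).eval x
      simp
    rw [heval] at tot
    apply tot.congr'
    filter_upwards [self_mem_nhdsWithin] with ε hε
    exact (hev ε hε).symm

/-- If ψ is a polynomial of degree m, then the principal-value integral
x ↦ ∫₋₁¹ √(1-t²)ψ(t)/(t-x) dt agrees on (-1,1) with a polynomial of degree at most m+1. -/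
theorem stmt_11 (m : ℕ) (p : Polynomial ℝ) (hp : p.natDegree = m) (F : ℝ → ℝ)
    (hF : ∀ x ∈ Set.Ioo (-1 : ℝ) 1,
      Tendsto (fun ε : ℝ =>
          (∫ t in (-1 : ℝ)..(x - ε), Real.sqrt (1 - t ^ 2) * p.eval t / (t - x)) +
          ∫ t in (x + ε)..(1 : ℝ), Real.sqrt (1 - t ^ 2) * p.eval t / (t - x))
        (nhdsWithin 0 (Set.Ioi 0)) (nhds (F x))) :
    ∃ q : Polynomial ℝ, q.natDegree ≤ m + 1 ∧
      ∀ x ∈ Set.Ioo (-1 : ℝ) 1, F x = q.eval x := by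
  refine ⟨∑ j ∈ Finset.range (m+1), Polynomial.C (p.coeff j) * pvM j, ?_, ?_⟩
  · apply natDegree_sum_le_of_forall_le
    intro j hj
    have hj' := Finset.mem_range.1 hj
    exact (natDegree_C_mul_le _ _).trans ((pvM_deg j).trans (by omega))
  · intro x hx
    obtain ⟨hx1, hx2⟩ := hx
    refine tendsto_nhds_unique (hF x ⟨hx1, hx2⟩) ?_
    have hsum := tendsto_finset_sum (Finset.range (m+1))
      (fun j _ => ((keyT j ⟨hx1, hx2⟩).const_mul (p.coeff j)))
    have heval : (∑ j ∈ Finset.range (m+1), Polynomial.C (p.coeff j) * pvM j).eval x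
        = ∑ j ∈ Finset.range (m+1), p.coeff j * (pvM j).eval x := by
      simp [Polynomial.eval_finset_sum]
    rw [heval]
    apply hsum.congr'
    filter_upwards [self_mem_nhdsWithin] with ε hε
    have hev : ∀ a b : ℝ, (∀ t ∈ Set.uIcc a b, t ≠ x) →
        (∫ t in a..b, Real.sqrt (1 - t^2) * p.eval t / (t - x))
        = ∑ j ∈ Finset.range (m+1), p.coeff j *
            ∫ t in a..b, Real.sqrt (1 - t^2) * t^j / (t - x) := by
      intro a b hne
      have h1 : Set.EqOn (fun t : ℝ => Real.sqrt (1 - t^2) * p.eval t / (t - x))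
          (fun t : ℝ => ∑ j ∈ Finset.range (m+1),
            p.coeff j * (Real.sqrt (1 - t^2) * t^j / (t - x))) (Set.uIcc a b) := by
        intro t ht
        show Real.sqrt (1 - t^2) * p.eval t / (t - x) = _
        rw [← hp, Polynomial.eval_eq_sum_range, Finset.mul_sum, Finset.sum_div, hp]
        apply Finset.sum_congr rfl
        intro j _
        ring
      rw [intervalIntegral.integral_congr h1,
        intervalIntegral.integral_finset_sum
          (fun j _ => ((contOn_aux x j hne).intervalIntegrable).const_mul (p.coeff j))]
      exact Finset.sum_congr rfl fun j _ => intervalIntegral.integral_const_mul _ _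
    have hεpos : (0:ℝ) < ε := hε
    rw [hev (-1) (x-ε) (ne_left hx1 hεpos), hev (x+ε) 1 (ne_right hx2 hεpos),
      ← Finset.sum_add_distrib]
    exact Finset.sum_congr rfl fun j _ => by ring
end
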